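/- Let μ be a probability measure on a measurable space Ω, let N ∈ ℕ with N ≥ 3, let C ≥ 1, and let a : Fin N → Ω → ℝ be measurable functions with a i ω ≥ 0 for all i, ω. Assume that ∫ (a i)^r dμ ≤ C^r · r^{r/2} for every real r ≥ 1 and every i. Then for every real p ≥ 1, ∫ (⨆_i a i)^p dμ ≤ e · C^p · (p · Real.log N)^{p/2}, where e = exp 1. -/

import Mathlib

open MeasureTheory
open scoped ENNReal

/-- Maximal moment estimate: uniform moment bounds `∫ aᵢ^r ≤ C^r·r^{r/2}` for `N ≥ 3`
nonnegative random variables imply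
`∫ (max_i aᵢ)^p ≤ e·C^p·(p·log N)^{p/2}` for every `p ≥ 1`. -/
theorem max_moment_bound {Ω : Type*} [MeasurableSpace Ω] (μ : Measure Ω)
    [IsProbabilityMeasure μ] (N : ℕ) (hN : 3 ≤ N) (C : ℝ) (hC : 1 ≤ C)
    (a : Fin N → Ω → ℝ) (hmeas : ∀ i, Measurable (a i)) (hpos : ∀ i ω, 0 ≤ a i ω)
    (hmom : ∀ r : ℝ, 1 ≤ r → ∀ i,
      (∫⁻ ω, ENNReal.ofReal (a i ω ^ r) ∂μ) ≤ ENNReal.ofReal (C ^ r * r ^ (r / 2))) :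
    ∀ p : ℝ, 1 ≤ p →
      (∫⁻ ω, ENNReal.ofReal ((⨆ i, a i ω) ^ p) ∂μ)
        ≤ ENNReal.ofReal (Real.exp 1 * C ^ p * (p * Real.log (N : ℝ)) ^ (p / 2)) := by
  intro p hp
  have hNpos : (0:ℝ) < N := by positivity
  have hN3 : (3:ℝ) ≤ N := by exact_mod_cast hN
  set q : ℝ := Real.log N with hqdef
  have hq1 : 1 < q := by
    have h3 : (1:ℝ) < Real.log 3 := by
      rw [Real.lt_log_iff_exp_lt (by norm_num : (0:ℝ) < 3)]
      have := Real.exp_one_lt_d9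
      linarith
    have : Real.log 3 ≤ q := Real.log_le_log (by norm_num) hN3
    linarith
  have hq0 : 0 < q := by linarith
  have hqne : q ≠ 0 := ne_of_gt hq0
  have hp0 : 0 < p := by linarith
  have hpq1 : 1 ≤ p * q := one_le_mul_of_one_le_of_one_le hp hq1.le
  have hpq0 : 0 < p * q := by linarith
  -- the auxiliary function
  set g : Ω → ENNReal := fun ω => ∑ i, ENNReal.ofReal (a i ω ^ (p * q)) with hgdef
  have hgi_meas : ∀ i : Fin N, Measurable fun ω => ENNReal.ofReal (a i ω ^ (p * q)) :=
    fun i => ((hmeas i).pow_const (p * q)).ennreal_ofReal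
  have hgmeas : Measurable g := Finset.measurable_sum _ fun i _ => hgi_meas i
  -- pointwise bound
  have hpt : ∀ ω, ENNReal.ofReal ((⨆ i, a i ω) ^ p) ≤ g ω ^ (1 / q) := by
    intro ω
    haveI : Nonempty (Fin N) := ⟨⟨0, by omega⟩⟩
    obtain ⟨i₀, hi₀⟩ := Finite.exists_max fun i => a i ω
    have hsup : (⨆ i, a i ω) = a i₀ ω :=
      le_antisymm (ciSup_le hi₀)
        (le_ciSup (f := fun i => a i ω) (Set.Finite.bddAbove (Set.finite_range _)) i₀)
    rw [hsup]
    have h1 : ENNReal.ofReal (a i₀ ω ^ p)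
        = ENNReal.ofReal (a i₀ ω ^ (p * q)) ^ (1 / q) := by
      rw [ENNReal.ofReal_rpow_of_nonneg (Real.rpow_nonneg (hpos i₀ ω) _) (by positivity),
        ← Real.rpow_mul (hpos i₀ ω)]
      congr 1
      field_simp
    rw [h1]
    refine ENNReal.rpow_le_rpow ?_ (by positivity)
    exact Finset.single_le_sum (f := fun i => ENNReal.ofReal (a i ω ^ (p * q)))
      (fun i _ => zero_le) (Finset.mem_univ i₀)
  -- Jensen via Hölder with exponents (q, q/(q-1))
  have hjensen : (∫⁻ ω, g ω ^ (1 / q) ∂μ) ≤ (∫⁻ ω, g ω ∂μ) ^ (1 / q) := by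
    have hconj : q.HolderConjugate q.conjExponent := Real.HolderConjugate.conjExponent hq1
    have holder := ENNReal.lintegral_mul_le_Lp_mul_Lq μ hconj
      (f := fun ω => g ω ^ (1 / q)) (g := fun _ => (1:ℝ≥0∞))
      (hgmeas.pow_const _).aemeasurable aemeasurable_const
    simpa [← ENNReal.rpow_mul, one_div, inv_mul_cancel₀ hqne, ENNReal.rpow_one,
      measure_univ] using holder
  -- integral bound on g
  have hsum : (∫⁻ ω, g ω ∂μ)
      ≤ ENNReal.ofReal ((N : ℝ) * (C ^ (p * q) * (p * q) ^ ((p * q) / 2))) := by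
    rw [hgdef, lintegral_finset_sum _ fun i _ => hgi_meas i]
    calc ∑ i : Fin N, ∫⁻ ω, ENNReal.ofReal (a i ω ^ (p * q)) ∂μ
        ≤ ∑ _i : Fin N, ENNReal.ofReal (C ^ (p * q) * (p * q) ^ ((p * q) / 2)) :=
          Finset.sum_le_sum fun i _ => hmom _ hpq1 i
      _ = (N : ℝ≥0∞) * ENNReal.ofReal (C ^ (p * q) * (p * q) ^ ((p * q) / 2)) := by
          rw [Finset.sum_const, Finset.card_univ, Fintype.card_fin, nsmul_eq_mul]
      _ = ENNReal.ofReal ((N : ℝ) * (C ^ (p * q) * (p * q) ^ ((p * q) / 2))) := by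
          rw [← ENNReal.ofReal_natCast N, ← ENNReal.ofReal_mul (by positivity)]
  -- the real computation
  have hreal : ((N : ℝ) * (C ^ (p * q) * (p * q) ^ ((p * q) / 2))) ^ (1 / q)
      = Real.exp 1 * C ^ p * (p * q) ^ (p / 2) := by
    have hC0 : (0:ℝ) ≤ C := by linarith
    rw [Real.mul_rpow (by positivity) (by positivity),
      Real.mul_rpow (by positivity) (by positivity),
      ← Real.rpow_mul hC0, ← Real.rpow_mul hpq0.le]
    have e1 : (N : ℝ) ^ (1 / q) = Real.exp 1 := by
      rw [Real.rpow_def_of_pos hNpos, ← hqdef, mul_one_div, div_self hqne]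
    have e2 : p * q * (1 / q) = p := by field_simp
    have e3 : p * q / 2 * (1 / q) = p / 2 := by field_simp
    rw [e1, e2, e3, mul_assoc]
  -- put everything together
  calc (∫⁻ ω, ENNReal.ofReal ((⨆ i, a i ω) ^ p) ∂μ)
      ≤ ∫⁻ ω, g ω ^ (1 / q) ∂μ := lintegral_mono hpt
    _ ≤ (∫⁻ ω, g ω ∂μ) ^ (1 / q) := hjensen
    _ ≤ (ENNReal.ofReal ((N : ℝ) * (C ^ (p * q) * (p * q) ^ ((p * q) / 2)))) ^ (1 / q) :=
        ENNReal.rpow_le_rpow hsum (by positivity)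
    _ = ENNReal.ofReal (Real.exp 1 * C ^ p * (p * Real.log (N : ℝ)) ^ (p / 2)) := by
        have hC0 : (0:ℝ) < C := by linarith
        have hbig0 : (0:ℝ) ≤ (N : ℝ) * (C ^ (p * q) * (p * q) ^ ((p * q) / 2)) :=
          mul_nonneg hNpos.le (mul_nonneg (Real.rpow_nonneg hC0.le _)
            (Real.rpow_nonneg hpq0.le _))
        rw [ENNReal.ofReal_rpow_of_nonneg hbig0 (by positivity), hreal]
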